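/- Lemma 4 (gradient approximation error of the smoothing): Let d ≥ 1, L ≥ 0, μ > 0, and let f : ℝ^d → ℝ be differentiable and L-smooth. Then for every x ∈ ℝ^d, ‖∇f_μ(x) − ∇f(x)‖ ≤ (μ/2) L (d + 3)^{3/2}. -/

import Mathlib

open MeasureTheory ProbabilityTheory

/-- The standard Gaussian measure `N(0, I_d)` on `ℝ^d`. -/
noncomputable def stdGaussian (d : ℕ) : Measure (EuclideanSpace ℝ (Fin d)) :=
  (Measure.pi fun _ : Fin d => gaussianReal 0 1).map
    (MeasurableEquiv.toLp 2 (Fin d → ℝ))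

section Auxiliary

open Real Set
open scoped NNReal ENNReal

lemma gpdf01 (x : ℝ) : gaussianPDFReal 0 1 x = (Real.sqrt (2 * π))⁻¹ * Real.exp (-x ^ 2 / 2) := by
  simp [gaussianPDFReal]

lemma integral_gaussianReal01 (g : ℝ → ℝ) :
    ∫ x, g x ∂(gaussianReal 0 1) = ∫ x, gaussianPDFReal 0 1 x * g x := by
  rw [gaussianReal_of_var_ne_zero _ one_ne_zero,
    show gaussianPDF 0 1 = fun x => ((Real.toNNReal (gaussianPDFReal 0 1 x) : ℝ≥0) : ℝ≥0∞) from rfl,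
    integral_withDensity_eq_integral_smul (measurable_gaussianPDFReal 0 1).real_toNNReal]
  congr 1; ext x
  rw [NNReal.smul_def, smul_eq_mul, Real.coe_toNNReal _ (gaussianPDFReal_nonneg 0 1 x)]

lemma integrable_gaussianReal01 {g : ℝ → ℝ}
    (h : Integrable (fun x => g x * gaussianPDFReal 0 1 x)) :
    Integrable g (gaussianReal 0 1) := by
  rw [gaussianReal_of_var_ne_zero _ one_ne_zero,
    integrable_withDensity_iff (measurable_gaussianPDF 0 1)
      (ae_of_all _ fun x => ENNReal.ofReal_lt_top)]
  refine h.congr (ae_of_all _ fun x => ?_)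
  show g x * gaussianPDFReal 0 1 x = g x * (gaussianPDF 0 1 x).toReal
  rw [gaussianPDF, ENNReal.toReal_ofReal (gaussianPDFReal_nonneg 0 1 x)]

lemma integrable_abs_exp_half : Integrable (fun x : ℝ => |x| * Real.exp (-x ^ 2 / 2)) := by
  have h := (integrable_mul_exp_neg_mul_sq (b := 1/2) (by norm_num)).abs
  refine h.congr (ae_of_all _ fun x => ?_)
  show |x * Real.exp (-(1/2) * x ^ 2)| = |x| * Real.exp (-x ^ 2 / 2)
  rw [abs_mul, abs_of_nonneg (Real.exp_pos _).le]
  ring_nf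

lemma integrable_abs_gaussian : Integrable (fun x : ℝ => |x|) (gaussianReal 0 1) := by
  refine integrable_gaussianReal01 ?_
  have h := integrable_abs_exp_half.const_mul (Real.sqrt (2 * π))⁻¹
  refine h.congr (ae_of_all _ fun x => ?_)
  show (Real.sqrt (2 * π))⁻¹ * (|x| * Real.exp (-x ^ 2 / 2)) = |x| * gaussianPDFReal 0 1 x
  rw [gpdf01]; ring

lemma integrable_sq_gaussian : Integrable (fun x : ℝ => x ^ 2) (gaussianReal 0 1) := by
  refine integrable_gaussianReal01 ?_
  have h := (integrable_rpow_mul_exp_neg_mul_sq (b := 1/2) (by norm_num)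
    (s := 2) (by norm_num)).const_mul (Real.sqrt (2 * π))⁻¹
  refine h.congr (ae_of_all _ fun x => ?_)
  show (Real.sqrt (2 * π))⁻¹ * (x ^ (2:ℝ) * Real.exp (-(1/2) * x ^ 2)) = x ^ 2 * gaussianPDFReal 0 1 x
  rw [gpdf01, Real.rpow_two]; ring_nf

lemma integral_Ioi_x_exp : ∫ x in Ioi (0:ℝ), x * Real.exp (-x ^ 2 / 2) = 1 := by
  have hderiv : ∀ x ∈ Ici (0:ℝ), HasDerivAt (fun t : ℝ => -Real.exp (-t ^ 2 / 2))
      (x * Real.exp (-x ^ 2 / 2)) x := by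
    intro x _
    have h1 : HasDerivAt (fun t : ℝ => -t ^ 2 / 2) (-x) x := by
      have := ((hasDerivAt_pow 2 x).neg).div_const 2
      refine this.congr_deriv ?_
      simp; ring
    have h2 := (h1.exp).neg
    refine h2.congr_deriv ?_
    ring
  have hint : IntegrableOn (fun x : ℝ => x * Real.exp (-x ^ 2 / 2)) (Ioi 0) := by
    refine ((integrable_mul_exp_neg_mul_sq (b := 1/2) (by norm_num)).congr ?_).integrableOn
    refine ae_of_all _ fun x => ?_
    show x * Real.exp (-(1/2) * x ^ 2) = x * Real.exp (-x ^ 2 / 2)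
    ring_nf
  have htend : Filter.Tendsto (fun t : ℝ => -Real.exp (-t ^ 2 / 2)) Filter.atTop (nhds 0) := by
    rw [show (0:ℝ) = -0 by norm_num]
    refine Filter.Tendsto.neg ?_
    refine Real.tendsto_exp_atBot.comp ?_
    have h3 : Filter.Tendsto (fun t : ℝ => t ^ 2 / 2) Filter.atTop Filter.atTop :=
      (Filter.tendsto_pow_atTop two_ne_zero).atTop_div_const (by norm_num)
    have := Filter.tendsto_neg_atTop_atBot.comp h3
    refine this.congr fun t => ?_
    show -(t ^ 2 / 2) = -t ^ 2 / 2
    ring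
  have := integral_Ioi_of_hasDerivAt_of_tendsto' hderiv hint htend
  simpa using this

lemma abs_moment_gaussian : ∫ x, |x| ∂(gaussianReal 0 1) ≤ 1 := by
  rw [integral_gaussianReal01]
  have h1 : ∫ x : ℝ, gaussianPDFReal 0 1 x * |x|
      = (Real.sqrt (2 * π))⁻¹ * ∫ x : ℝ, |x| * Real.exp (-x ^ 2 / 2) := by
    rw [← integral_const_mul]
    congr 1; funext x; rw [gpdf01]; ring
  have h2 : ∫ x : ℝ, |x| * Real.exp (-x ^ 2 / 2) = 2 := by
    have : (fun x : ℝ => |x| * Real.exp (-x ^ 2 / 2))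
        = fun x : ℝ => |x| * Real.exp (-|x| ^ 2 / 2) := by
      funext x; rw [sq_abs]
    rw [this, integral_comp_abs (f := fun x : ℝ => x * Real.exp (-x ^ 2 / 2)),
      integral_Ioi_x_exp, mul_one]
  rw [h1, h2]
  have h3 : (2:ℝ) ≤ Real.sqrt (2 * π) := by
    nlinarith [Real.sq_sqrt (by positivity : (0:ℝ) ≤ 2 * π), Real.sqrt_nonneg (2 * π),
      Real.pi_gt_three]
  rw [inv_mul_le_iff₀ (by positivity), mul_one]
  exact h3
instance stdGaussian_prob (d : ℕ) : IsProbabilityMeasure (stdGaussian d) :=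
  Measure.isProbabilityMeasure_map (MeasurableEquiv.toLp 2 (Fin d → ℝ)).measurable.aemeasurable

lemma measurePreserving_eval_gauss (d : ℕ) (i : Fin d) :
    MeasurePreserving (Function.eval i) (Measure.pi fun _ : Fin d => gaussianReal 0 1)
      (gaussianReal 0 1) := by
  refine ⟨measurable_pi_apply i, ?_⟩
  ext s hs
  rw [Measure.map_apply (measurable_pi_apply i) hs, Set.eval_preimage,
    Measure.pi_pi]
  rw [Finset.prod_eq_single i]
  · simp
  · intro j _ hj; simp [Function.update_of_ne hj]
  · simp

lemma integrable_eval_gauss {d : ℕ} (i : Fin d) {g : ℝ → ℝ} (hg : Measurable g)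
    (h : Integrable g (gaussianReal 0 1)) :
    Integrable (fun y : Fin d → ℝ => g (y i)) (Measure.pi fun _ : Fin d => gaussianReal 0 1) :=
  ((measurePreserving_eval_gauss d i).integrable_comp hg.aestronglyMeasurable).mpr h

lemma integral_eval_gauss {d : ℕ} (i : Fin d) {g : ℝ → ℝ} (hg : Measurable g) :
    ∫ y : Fin d → ℝ, g (y i) ∂(Measure.pi fun _ : Fin d => gaussianReal 0 1)
      = ∫ x, g x ∂(gaussianReal 0 1) := by
  have h := integral_map (μ := Measure.pi fun _ : Fin d => gaussianReal 0 1)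
    (φ := Function.eval i) (measurable_pi_apply i).aemeasurable (f := g)
    (by rw [(measurePreserving_eval_gauss d i).map_eq]; exact hg.aestronglyMeasurable)
  rw [(measurePreserving_eval_gauss d i).map_eq] at h
  exact h.symm

lemma norm_symm_eq {d : ℕ} (y : Fin d → ℝ) :
    ‖(MeasurableEquiv.toLp 2 (Fin d → ℝ)) y‖ = Real.sqrt (∑ i, (y i) ^ 2) := by
  rw [EuclideanSpace.norm_eq]
  congr 1; refine Finset.sum_congr rfl fun i _ => ?_
  rw [Real.norm_eq_abs, sq_abs]
  rfl

lemma norm_le_sum_abs {d : ℕ} (y : Fin d → ℝ) :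
    ‖(MeasurableEquiv.toLp 2 (Fin d → ℝ)) y‖ ≤ ∑ i, |y i| := by
  rw [norm_symm_eq]
  have h1 : ∑ i, (y i) ^ 2 ≤ (∑ i, |y i|) ^ 2 := by
    have := Finset.sum_sq_le_sq_sum_of_nonneg (s := Finset.univ) (f := fun i => |y i|)
      (fun i _ => abs_nonneg (y i))
    simpa [sq_abs] using this
  calc Real.sqrt (∑ i, (y i) ^ 2) ≤ Real.sqrt ((∑ i, |y i|) ^ 2) := Real.sqrt_le_sqrt h1
    _ = ∑ i, |y i| := Real.sqrt_sq (Finset.sum_nonneg fun i _ => abs_nonneg (y i))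

lemma integrable_norm_stdGaussian (d : ℕ) :
    Integrable (fun u => ‖u‖) (stdGaussian d) := by
  rw [_root_.stdGaussian, integrable_map_equiv]
  have hcont : Continuous fun y : Fin d → ℝ => Real.sqrt (∑ i, (y i) ^ 2) :=
    (continuous_finset_sum _ fun i _ => (continuous_apply i).pow 2).sqrt
  refine Integrable.mono' (g := fun y : Fin d → ℝ => ∑ i, |y i|)
    (integrable_finset_sum _ fun i _ =>
      integrable_eval_gauss i measurable_abs integrable_abs_gaussian)
    (hcont.aestronglyMeasurable.congr ?_) (ae_of_all _ fun y => ?_)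
  · exact ae_of_all _ fun y => (norm_symm_eq y).symm
  · show ‖‖(MeasurableEquiv.toLp 2 (Fin d → ℝ)) y‖‖ ≤ ∑ i, |y i|
    rw [norm_norm]
    exact norm_le_sum_abs y

lemma integral_norm_stdGaussian (d : ℕ) :
    ∫ u, ‖u‖ ∂(stdGaussian d) ≤ d := by
  have hle : ∫ u, ‖u‖ ∂(stdGaussian d)
      ≤ ∫ y : Fin d → ℝ, ∑ i, |y i| ∂(Measure.pi fun _ : Fin d => gaussianReal 0 1) := by
    rw [_root_.stdGaussian, MeasureTheory.integral_map_equiv]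
    refine integral_mono ?_ ?_ ?_
    · have := integrable_norm_stdGaussian d
      rwa [_root_.stdGaussian, integrable_map_equiv] at this
    · exact integrable_finset_sum _ fun i _ =>
        integrable_eval_gauss i measurable_abs integrable_abs_gaussian
    · intro y; exact norm_le_sum_abs y
  refine hle.trans ?_
  rw [integral_finset_sum _ fun i _ =>
    integrable_eval_gauss i measurable_abs integrable_abs_gaussian]
  have : ∀ i : Fin d, ∫ y : Fin d → ℝ, |y i| ∂(Measure.pi fun _ : Fin d => gaussianReal 0 1) ≤ 1 :=
    fun i => by rw [integral_eval_gauss i measurable_abs]; exact abs_moment_gaussian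
  calc (∑ i : Fin d, ∫ y : Fin d → ℝ, |y i| ∂(Measure.pi fun _ : Fin d => gaussianReal 0 1))
      ≤ ∑ _i : Fin d, (1:ℝ) := Finset.sum_le_sum fun i _ => this i
    _ = d := by simp

lemma integrable_norm_sq_stdGaussian (d : ℕ) :
    Integrable (fun u => ‖u‖ ^ 2) (stdGaussian d) := by
  rw [_root_.stdGaussian, integrable_map_equiv]
  have heq : (fun y : Fin d → ℝ => ‖(MeasurableEquiv.toLp 2 (Fin d → ℝ)) y‖ ^ 2)
      = fun y : Fin d → ℝ => ∑ i, (y i) ^ 2 := by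
    funext y
    rw [norm_symm_eq, Real.sq_sqrt (Finset.sum_nonneg fun i _ => sq_nonneg (y i))]
  refine (integrable_finset_sum Finset.univ fun i (_ : i ∈ Finset.univ) =>
    integrable_eval_gauss i (measurable_id.pow_const 2) integrable_sq_gaussian).congr ?_
  exact ae_of_all _ fun y => (congrFun heq y).symm

end Auxiliary

set_option maxHeartbeats 1000000 in
/-- Lemma 4: `‖∇f_μ(x) - ∇f(x)‖ ≤ (μ/2) L (d+3)^{3/2}`. -/
theorem gradient_approximation_error
    (d : ℕ) (hd : 1 ≤ d) (L μ : ℝ) (hL : 0 ≤ L) (hμ : 0 < μ)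
    (f : EuclideanSpace ℝ (Fin d) → ℝ)
    (hf : Differentiable ℝ f)
    (hsmooth : ∀ x y, ‖gradient f x - gradient f y‖ ≤ L * ‖x - y‖)
    (x : EuclideanSpace ℝ (Fin d)) :
    ‖gradient (fun y => ∫ u, f (y + μ • u) ∂stdGaussian d) x - gradient f x‖
      ≤ (μ / 2) * L * ((d : ℝ) + 3) ^ ((3 : ℝ) / 2) := by
  classical
  set ν := stdGaussian d with hν
  have hgradlip : ∀ z w : EuclideanSpace ℝ (Fin d),
      ‖fderiv ℝ f z - fderiv ℝ f w‖ ≤ L * ‖z - w‖ := by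
    intro z w
    have h := hsmooth z w
    rwa [gradient, gradient, ← LinearIsometryEquiv.map_sub, LinearIsometryEquiv.norm_map] at h
  have hcontfd : Continuous fun z : EuclideanSpace ℝ (Fin d) => fderiv ℝ f z := by
    have hlip : LipschitzWith (Real.toNNReal L) fun z : EuclideanSpace ℝ (Fin d) =>
        fderiv ℝ f z := by
      refine LipschitzWith.of_dist_le_mul fun z w => ?_
      rw [dist_eq_norm, dist_eq_norm]
      exact (hgradlip z w).trans (by rw [Real.coe_toNNReal L hL])
    exact hlip.continuous
  have hmeasF' : AEStronglyMeasurable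
      (fun u : EuclideanSpace ℝ (Fin d) => fderiv ℝ f (x + μ • u)) ν :=
    (hcontfd.comp (continuous_const.add (continuous_id.const_smul μ))).aestronglyMeasurable
  set C := ‖fderiv ℝ f x‖ with hC
  have hbound_int : Integrable
      (fun u : EuclideanSpace ℝ (Fin d) => (C + L) + (L * μ) * ‖u‖) ν :=
    (integrable_const _).add ((integrable_norm_stdGaussian d).const_mul (L * μ))
  have h_bound : ∀ u : EuclideanSpace ℝ (Fin d), ∀ y ∈ Metric.ball x 1,
      ‖fderiv ℝ f (y + μ • u)‖ ≤ (C + L) + (L * μ) * ‖u‖ := by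
    intro u y hy
    have h1 := hgradlip (y + μ • u) x
    have h2 := norm_sub_norm_le (fderiv ℝ f (y + μ • u)) (fderiv ℝ f x)
    have h3 : ‖y + μ • u - x‖ ≤ ‖y - x‖ + μ * ‖u‖ := by
      have he : y + μ • u - x = (y - x) + μ • u := by abel
      rw [he]
      refine (norm_add_le _ _).trans ?_
      rw [norm_smul, Real.norm_eq_abs, abs_of_pos hμ]
    have h4 : ‖y - x‖ ≤ 1 := by
      rw [Metric.mem_ball, dist_eq_norm] at hy; exact hy.le
    have h5 : L * ‖y + μ • u - x‖ ≤ L * (1 + μ * ‖u‖) :=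
      mul_le_mul_of_nonneg_left (by linarith) hL
    nlinarith [norm_nonneg u]
  have h_diff : ∀ u : EuclideanSpace ℝ (Fin d), ∀ y ∈ Metric.ball x 1,
      HasFDerivAt (fun z => f (z + μ • u)) (fderiv ℝ f (y + μ • u)) y := by
    intro u y _
    have h := ((hf (y + μ • u)).hasFDerivAt).comp y ((hasFDerivAt_id y).add_const (μ • u))
    exact h
  have hFcont : ∀ y : EuclideanSpace ℝ (Fin d),
      Continuous fun u : EuclideanSpace ℝ (Fin d) => f (y + μ • u) := fun y =>
    hf.continuous.comp (continuous_const.add (continuous_id.const_smul μ))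
  have hF_int : Integrable (fun u : EuclideanSpace ℝ (Fin d) => f (x + μ • u)) ν := by
    refine Integrable.mono'
      (g := fun u => (|f x| + (μ * C) * ‖u‖) + (L * μ ^ 2) * ‖u‖ ^ 2)
      (((integrable_const _).add ((integrable_norm_stdGaussian d).const_mul _)).add
        ((integrable_norm_sq_stdGaussian d).const_mul _))
      (hFcont x).aestronglyMeasurable (ae_of_all _ fun u => ?_)
    have hmem : x + μ • u ∈ Metric.closedBall x (μ * ‖u‖) := by
      rw [Metric.mem_closedBall, dist_eq_norm, add_sub_cancel_left, norm_smul,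
        Real.norm_eq_abs, abs_of_pos hμ]
    have key : ‖f (x + μ • u) - f x‖ ≤ (C + L * (μ * ‖u‖)) * ‖(x + μ • u) - x‖ := by
      refine Convex.norm_image_sub_le_of_norm_fderiv_le (fun z _ => hf z) (fun z hz => ?_)
        (convex_closedBall _ _) (Metric.mem_closedBall_self (by positivity)) hmem
      have hz' : ‖z - x‖ ≤ μ * ‖u‖ := by rwa [Metric.mem_closedBall, dist_eq_norm] at hz
      have hl := hgradlip z x
      have h2 := norm_sub_norm_le (fderiv ℝ f z) (fderiv ℝ f x)
      nlinarith
    have hnorm : ‖(x + μ • u) - x‖ = μ * ‖u‖ := by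
      rw [add_sub_cancel_left, norm_smul, Real.norm_eq_abs, abs_of_pos hμ]
    rw [hnorm] at key
    have habs := abs_sub_abs_le_abs_sub (f (x + μ • u)) (f x)
    rw [Real.norm_eq_abs] at key
    have hring : (C + L * (μ * ‖u‖)) * (μ * ‖u‖) = μ * C * ‖u‖ + L * μ ^ 2 * ‖u‖ ^ 2 := by ring
    show ‖f (x + μ • u)‖ ≤ |f x| + μ * C * ‖u‖ + L * μ ^ 2 * ‖u‖ ^ 2
    rw [Real.norm_eq_abs]
    linarith
  have hder : HasFDerivAt (fun y => ∫ u, f (y + μ • u) ∂ν)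
      (∫ u, fderiv ℝ f (x + μ • u) ∂ν) x :=
    hasFDerivAt_integral_of_dominated_of_fderiv_le
      (F' := fun y u => fderiv ℝ f (y + μ • u)) (bound := fun u => (C + L) + (L * μ) * ‖u‖)
      (Metric.ball_mem_nhds x one_pos) (Filter.Eventually.of_forall fun y => (hFcont y).aestronglyMeasurable) hF_int
      hmeasF' (ae_of_all _ h_bound) hbound_int (ae_of_all _ h_diff)
  have hint' : Integrable (fun u : EuclideanSpace ℝ (Fin d) => fderiv ℝ f (x + μ • u)) ν :=
    Integrable.mono' hbound_int hmeasF'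
      (ae_of_all _ fun u => h_bound u x (Metric.mem_ball_self one_pos))
  have h2 : gradient (fun y => ∫ u, f (y + μ • u) ∂ν) x - gradient f x
      = (InnerProductSpace.toDual ℝ (EuclideanSpace ℝ (Fin d))).symm
        ((∫ u, fderiv ℝ f (x + μ • u) ∂ν) - fderiv ℝ f x) := by
    rw [gradient, gradient, hder.fderiv, LinearIsometryEquiv.map_sub]
  rw [h2, LinearIsometryEquiv.norm_map]
  have h3 : (∫ u, fderiv ℝ f (x + μ • u) ∂ν) - fderiv ℝ f x
      = ∫ u, (fderiv ℝ f (x + μ • u) - fderiv ℝ f x) ∂ν := by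
    rw [integral_sub hint' (integrable_const _), integral_const, probReal_univ,
      one_smul]
  rw [h3]
  have hd4 : (4:ℝ) ≤ (d:ℝ) + 3 := by
    have h1d : (1:ℝ) ≤ (d:ℝ) := by exact_mod_cast hd
    linarith
  have hhalf : (2:ℝ) ≤ ((d:ℝ) + 3) ^ ((1:ℝ)/2) := by
    have h4 : ((4:ℝ)) ^ ((1:ℝ)/2) = 2 := by
      rw [show (4:ℝ) = 2 ^ (2:ℕ) by norm_num, ← Real.rpow_natCast 2 2,
        ← Real.rpow_mul (by norm_num)]
      norm_num
    calc (2:ℝ) = (4:ℝ) ^ ((1:ℝ)/2) := h4.symm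
      _ ≤ ((d:ℝ) + 3) ^ ((1:ℝ)/2) :=
        Real.rpow_le_rpow (by norm_num : (0:ℝ) ≤ 4) hd4 (by norm_num : (0:ℝ) ≤ 1/2)
  have hsplit : ((d:ℝ) + 3) ^ ((3:ℝ)/2) = ((d:ℝ) + 3) * ((d:ℝ) + 3) ^ ((1:ℝ)/2) := by
    rw [show (3:ℝ)/2 = 1 + 1/2 by norm_num, Real.rpow_add (by positivity), Real.rpow_one]
  have hdle : 2 * (d:ℝ) ≤ ((d:ℝ) + 3) ^ ((3:ℝ)/2) := by
    rw [hsplit]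
    nlinarith [Nat.cast_nonneg (α := ℝ) d]
  calc ‖∫ u, (fderiv ℝ f (x + μ • u) - fderiv ℝ f x) ∂ν‖
      ≤ ∫ u, ‖fderiv ℝ f (x + μ • u) - fderiv ℝ f x‖ ∂ν := norm_integral_le_integral_norm _
    _ ≤ ∫ u, (L * μ) * ‖u‖ ∂ν := by
        refine integral_mono (hint'.sub (integrable_const _)).norm
          ((integrable_norm_stdGaussian d).const_mul _) fun u => ?_
        have hl := hgradlip (x + μ • u) x
        have he : ‖x + μ • u - x‖ = μ * ‖u‖ := by
          rw [add_sub_cancel_left, norm_smul, Real.norm_eq_abs, abs_of_pos hμ]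
        rw [he] at hl
        calc ‖fderiv ℝ f (x + μ • u) - fderiv ℝ f x‖ ≤ L * (μ * ‖u‖) := hl
          _ = (L * μ) * ‖u‖ := by ring
    _ = (L * μ) * ∫ u, ‖u‖ ∂ν := integral_const_mul _ _
    _ ≤ (L * μ) * d :=
        mul_le_mul_of_nonneg_left (integral_norm_stdGaussian d) (by positivity)
    _ ≤ (μ / 2) * L * ((d : ℝ) + 3) ^ ((3 : ℝ) / 2) := by
        have hmul := mul_le_mul_of_nonneg_left hdle
          (by positivity : (0:ℝ) ≤ μ * L / 2)
        calc (L * μ) * (d:ℝ) = (μ * L / 2) * (2 * d) := by ring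
          _ ≤ (μ * L / 2) * (((d:ℝ) + 3) ^ ((3:ℝ)/2)) := hmul
          _ = (μ / 2) * L * ((d : ℝ) + 3) ^ ((3 : ℝ) / 2) := by ring
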